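/- Let f: ℝⁿ → ℝ be a convex quartic polynomial with f₄ = (1/24)D⁴f its (constant) leading symmetric 4-linear form. Then for every x, every direction h, and every τ > 0, the symmetric bilinear form D³f(x)[h] satisfies D³f(x)[h][u,u] ≤ (1/τ) ∇²f(x)[u,u] + 12 τ f₄[h,h,u,u] for all u. -/

import Mathlib

open scoped Topology

/-- Directional derivative of the `k`-th iterated derivative along a line. -/
lemma lineDeriv_iter {E : Type*} [NormedAddCommGroup E] [NormedSpace ℝ E]
    {f : E → ℝ} (hf : ContDiff ℝ 4 f) {k : ℕ} (hk : k < 4)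
    (y w : E) (m : Fin k → E) (s : ℝ) :
    HasDerivAt (fun t : ℝ => iteratedFDeriv ℝ k f (y + t • w) m)
      (iteratedFDeriv ℝ (k + 1) f (y + s • w) (Fin.cons w m)) s := by
  have hd : Differentiable ℝ (iteratedFDeriv ℝ k f) :=
    hf.differentiable_iteratedFDeriv (by exact_mod_cast hk)
  have hline : HasDerivAt (fun t : ℝ => y + t • w) w s := by
    simpa using ((hasDerivAt_id s).smul_const w).const_add y
  have h1 : HasDerivAt (fun t : ℝ => iteratedFDeriv ℝ k f (y + t • w))
      (fderiv ℝ (iteratedFDeriv ℝ k f) (y + s • w) w) s :=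
    (hd (y + s • w)).hasFDerivAt.comp_hasDerivAt s hline
  have h2 := ((ContinuousMultilinearMap.apply ℝ (fun _ : Fin k => E) ℝ m).hasFDerivAt).comp_hasDerivAt s h1
  have h3 : iteratedFDeriv ℝ (k + 1) f (y + s • w) (Fin.cons w m)
      = (fderiv ℝ (iteratedFDeriv ℝ k f) (y + s • w) w) m := by
    rw [iteratedFDeriv_succ_apply_left]
    simp
  rw [h3]
  exact h2

/-- Second directional derivative of a convex `C^4` function is nonnegative. -/
lemma second_nonneg {E : Type*} [NormedAddCommGroup E] [NormedSpace ℝ E]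
    {f : E → ℝ} (hf : ContDiff ℝ 4 f) (hconv : ConvexOn ℝ Set.univ f)
    (y u : E) : 0 ≤ iteratedFDeriv ℝ 2 f y ![u, u] := by
  set g : ℝ → ℝ := fun t => f (y + t • u) with hg
  have hg1 : ∀ t : ℝ, HasDerivAt g (iteratedFDeriv ℝ 1 f (y + t • u) ![u]) t := by
    intro t
    have := lineDeriv_iter hf (by norm_num) y u ![] t
    simpa [iteratedFDeriv_zero_apply] using this
  have hg2 : ∀ t : ℝ, HasDerivAt (fun t : ℝ => iteratedFDeriv ℝ 1 f (y + t • u) ![u])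
      (iteratedFDeriv ℝ 2 f (y + t • u) ![u, u]) t := by
    intro t
    exact lineDeriv_iter hf (by norm_num) y u ![u] t
  have hcg : ConvexOn ℝ Set.univ g := by
    have := hconv.comp_affineMap (AffineMap.lineMap y (y + u))
    have he : (f ∘ (AffineMap.lineMap y (y + u))) = g := by
      funext t
      simp [AffineMap.lineMap_apply, hg, add_comm]
    rw [he, Set.preimage_univ] at this
    exact this
  have hderiv : deriv g = fun t => iteratedFDeriv ℝ 1 f (y + t • u) ![u] := by
    funext t; exact (hg1 t).deriv
  have hmono : Monotone (deriv g) := by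
    have := hcg.monotoneOn_deriv (fun t _ => (hg1 t).differentiableAt)
    exact fun a b hab => this (Set.mem_univ a) (Set.mem_univ b) hab
  have hd0 : HasDerivAt (deriv g) (iteratedFDeriv ℝ 2 f y ![u, u]) 0 := by
    rw [hderiv]
    simpa using hg2 0
  -- derivative of a monotone function is nonnegative
  have htend := hasDerivAt_iff_tendsto_slope.mp hd0
  have htend' : Filter.Tendsto (slope (deriv g) 0) (𝓝[>] (0:ℝ))
      (𝓝 (iteratedFDeriv ℝ 2 f y ![u, u])) :=
    htend.mono_left (nhdsWithin_mono _ (fun t ht => by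
      simp only [Set.mem_compl_iff, Set.mem_singleton_iff]
      exact ne_of_gt ht))
  refine ge_of_tendsto htend' ?_
  filter_upwards [self_mem_nhdsWithin] with t ht
  have h1 : deriv g 0 ≤ deriv g t := hmono (le_of_lt ht)
  have h2 : (0:ℝ) < t - 0 := by simpa using ht
  simp only [slope_def_field]
  exact div_nonneg (by linarith) (by linarith)



/-- For a convex quartic polynomial `f` with leading form `f₄ = (1/24)D⁴f`,
and any `τ > 0`: `D³f(x)[h,u,u] ≤ (1/τ)∇²f(x)[u,u] + 12τ f₄[h,h,u,u]`. -/
theorem third_deriv_bound {n : ℕ}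
    (f : EuclideanSpace ℝ (Fin n) → ℝ)
    (f4 : MultilinearMap ℝ (fun _ : Fin 4 => EuclideanSpace ℝ (Fin n)) ℝ)
    (hsymm : ∀ (v : Fin 4 → EuclideanSpace ℝ (Fin n)) (σ : Equiv.Perm (Fin 4)),
      f4 (v ∘ σ) = f4 v)
    (hf : ContDiff ℝ 4 f)
    (hconv : ConvexOn ℝ Set.univ f)
    (hD4 : ∀ (x : EuclideanSpace ℝ (Fin n)) (v : Fin 4 → EuclideanSpace ℝ (Fin n)),
      iteratedFDeriv ℝ 4 f x v = 24 * f4 v)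
    (x h u : EuclideanSpace ℝ (Fin n)) (τ : ℝ) (hτ : 0 < τ) :
    iteratedFDeriv ℝ 3 f x ![h, u, u]
      ≤ (1 / τ) * iteratedFDeriv ℝ 2 f x ![u, u] + 12 * τ * f4 ![h, h, u, u] := by
  
  set c4 : ℝ := f4 ![h, h, u, u] with hc4
  set G : ℝ → ℝ := fun s => iteratedFDeriv ℝ 2 f (x + s • h) ![u, u] with hG
  set G3 : ℝ → ℝ := fun s => iteratedFDeriv ℝ 3 f (x + s • h) ![h, u, u] with hG3
  have hGd : ∀ s : ℝ, HasDerivAt G (G3 s) s := fun s =>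
    lineDeriv_iter hf (by norm_num) x h ![u, u] s
  have hG3d : ∀ s : ℝ, HasDerivAt G3 (24 * c4) s := by
    intro s
    have := lineDeriv_iter hf (by norm_num) x h ![h, u, u] s
    rw [hD4] at this
    exact this
  -- G3 is affine
  have hG3lin : ∀ s : ℝ, G3 s = G3 0 + 24 * c4 * s := by
    intro s
    set φ : ℝ → ℝ := fun s => G3 s - 24 * c4 * s with hφ
    have hφd : ∀ s : ℝ, HasDerivAt φ 0 s := by
      intro s
      have := (hG3d s).sub ((hasDerivAt_id s).const_mul (24 * c4))
      simp at this; exact this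
    have := is_const_of_deriv_eq_zero (fun s => (hφd s).differentiableAt)
      (fun s => (hφd s).deriv) s 0
    simp only [hφ] at this
    have h0 : G3 0 - 24 * c4 * 0 = G3 0 := by ring
    linarith [this]
  -- G is quadratic
  have hGquad : ∀ s : ℝ, G s = G 0 + G3 0 * s + 12 * c4 * s ^ 2 := by
    intro s
    set ψ : ℝ → ℝ := fun s => G s - (G3 0 * s + 12 * c4 * s ^ 2) with hψ
    have hψd : ∀ s : ℝ, HasDerivAt ψ 0 s := by
      intro s
      have h1 : HasDerivAt (fun s : ℝ => G3 0 * s + 12 * c4 * s ^ 2)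
          (G3 0 + 24 * c4 * s) s := by
        have ha := (hasDerivAt_id s).const_mul (G3 0)
        have hb := (hasDerivAt_pow 2 s).const_mul (12 * c4)
        have := ha.add hb
        exact this.congr_deriv (by norm_num; ring)
      have := (hGd s).sub h1
      rw [← hG3lin s] at this
      simp at this; exact this
    have := is_const_of_deriv_eq_zero (fun s => (hψd s).differentiableAt)
      (fun s => (hψd s).deriv) s 0
    simp only [hψ] at this
    have h0 : G 0 - (G3 0 * 0 + 12 * c4 * 0 ^ 2) = G 0 := by ring
    linarith [this]
  have hpos : 0 ≤ G (-τ) := second_nonneg hf hconv (x + (-τ) • h) u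
  have hval : G (-τ) = G 0 - G3 0 * τ + 12 * c4 * τ ^ 2 := by
    rw [hGquad (-τ)]; ring
  have hG0 : G 0 = iteratedFDeriv ℝ 2 f x ![u, u] := by simp [hG]
  have hG30 : G3 0 = iteratedFDeriv ℝ 3 f x ![h, u, u] := by simp [hG3]
  rw [← hG0, ← hG30]
  rw [hval] at hpos
  have h2 : G3 0 ≤ (G 0 + 12 * c4 * τ ^ 2) / τ := (le_div_iff₀ hτ).mpr (by linarith)
  have h3 : (G 0 + 12 * c4 * τ ^ 2) / τ = 1 / τ * G 0 + 12 * τ * c4 := by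
    field_simp
  rw [h3] at h2
  exact h2
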